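/- arXiv:0901.1612 — 5 statements merged into one kernel-verified Lean document; each statement's English description precedes it below -/
import Mathlib

section
/- Let G be the group with presentation ⟨P, Q, R, B | [P,Q]=[Q,R]=[R,P]=B, [P,B]=[Q,B]=[R,B]=1⟩. Then every element of G can be written uniquely in the form P^p Q^q R^r B^μ for integers p, q, r, μ. -/
open FreeGroup
open scoped commutatorElement

/-- The relators of the group `G = ⟨P,Q,R,B | [P,Q]=[Q,R]=[R,P]=B, B central⟩`,
with generators indexed by `Fin 4` as `P = 0`, `Q = 1`, `R = 2`, `B = 3`. -/
def H3rels : Set (FreeGroup (Fin 4)) :=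
  { ⁅of (0 : Fin 4), of (1 : Fin 4)⁆ * (of (3 : Fin 4))⁻¹, ⁅of (1 : Fin 4), of (2 : Fin 4)⁆ * (of (3 : Fin 4))⁻¹, ⁅of (2 : Fin 4), of (0 : Fin 4)⁆ * (of (3 : Fin 4))⁻¹,
    ⁅of (0 : Fin 4), of (3 : Fin 4)⁆, ⁅of (1 : Fin 4), of (3 : Fin 4)⁆, ⁅of (2 : Fin 4), of (3 : Fin 4)⁆ }

/-- The group `G = H(3)` of link-homotopy classes of three-component string links. -/
abbrev H3 : Type := PresentedGroup H3rels

def H3.P : H3 := PresentedGroup.of (0 : Fin 4)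
def H3.Q : H3 := PresentedGroup.of (1 : Fin 4)
def H3.R : H3 := PresentedGroup.of (2 : Fin 4)
def H3.B : H3 := PresentedGroup.of (3 : Fin 4)

/-! ### A general commutation lemma -/

section Key

variable {G : Type*} [Group G] {x y b : G}

lemma key1 (hx : Commute x b) (hy : Commute y b) (h : y * x = x * y * b) (n : ℤ) :
    y * x ^ n = x ^ n * y * b ^ n := by
  have hs : SemiconjBy y x (x * b) := by
    unfold SemiconjBy
    rw [h, mul_assoc, mul_assoc, hy.eq]
  have h2 := hs.zpow_right n
  rw [hx.mul_zpow] at h2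
  rw [h2, mul_assoc, (hy.zpow_right n).symm.eq, ← mul_assoc]

lemma key (hx : Commute x b) (hy : Commute y b) (h : y * x = x * y * b) (m n : ℤ) :
    y ^ m * x ^ n = x ^ n * y ^ m * b ^ (m * n) := by
  have h1 : y * x ^ n = x ^ n * y * b ^ n := key1 hx hy h n
  have hXc : Commute (x ^ n) ((b ^ n)⁻¹) := ((hx.zpow_left n).zpow_right n).inv_right
  have hyc : Commute y ((b ^ n)⁻¹) := (hy.zpow_right n).inv_right
  have h2 : x ^ n * y = y * x ^ n * (b ^ n)⁻¹ := by
    rw [h1]; group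
  have h3 := key1 hyc hXc h2 m
  -- h3 : x ^ n * y ^ m = y ^ m * (x ^ n) ... careful with roles
  -- key1 with x := y, y := x ^ n, b := (b ^ n)⁻¹
  -- gives : (x ^ n) * y ^ m = y ^ m * (x ^ n) * ((b ^ n)⁻¹) ^ m
  rw [h3, mul_assoc, inv_zpow, ← zpow_neg, ← zpow_mul, mul_assoc, ← zpow_add,
    show n * -m + m * n = 0 by ring, zpow_zero, mul_one]

end Key

/-! ### The model group `NF` -/

@[ext]
structure NF where
  p : ℤ
  q : ℤ
  r : ℤ
  μ : ℤ

namespace NF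

instance : Mul NF :=
  ⟨fun a b => ⟨a.p + b.p, a.q + b.q, a.r + b.r,
    a.μ + b.μ + a.r * b.p - a.q * b.p - a.r * b.q⟩⟩

instance : One NF := ⟨⟨0, 0, 0, 0⟩⟩

instance : Inv NF :=
  ⟨fun a => ⟨-a.p, -a.q, -a.r, -a.μ + a.r * a.p - a.q * a.p - a.r * a.q⟩⟩

@[simp] lemma mul_def (a b : NF) :
    a * b = ⟨a.p + b.p, a.q + b.q, a.r + b.r,
      a.μ + b.μ + a.r * b.p - a.q * b.p - a.r * b.q⟩ := rfl

@[simp] lemma one_def : (1 : NF) = ⟨0, 0, 0, 0⟩ := rfl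

@[simp] lemma inv_def (a : NF) :
    a⁻¹ = ⟨-a.p, -a.q, -a.r, -a.μ + a.r * a.p - a.q * a.p - a.r * a.q⟩ := rfl

instance : Group NF where
  mul_assoc a b c := by ext <;> simp <;> ring
  one_mul a := by ext <;> simp
  mul_one a := by ext <;> simp
  inv_mul_cancel a := by ext <;> simp <;> ring

lemma eP_zpow (n : ℤ) : (⟨1, 0, 0, 0⟩ : NF) ^ n = ⟨n, 0, 0, 0⟩ := by
  induction n using Int.induction_on with
  | zero => simp
  | succ k ih => rw [zpow_add_one, ih]; ext <;> simp
  | pred k ih => rw [zpow_sub_one, ih]; ext <;> simp <;> omega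

lemma eQ_zpow (n : ℤ) : (⟨0, 1, 0, 0⟩ : NF) ^ n = ⟨0, n, 0, 0⟩ := by
  induction n using Int.induction_on with
  | zero => simp
  | succ k ih => rw [zpow_add_one, ih]; ext <;> simp
  | pred k ih => rw [zpow_sub_one, ih]; ext <;> simp <;> omega

lemma eR_zpow (n : ℤ) : (⟨0, 0, 1, 0⟩ : NF) ^ n = ⟨0, 0, n, 0⟩ := by
  induction n using Int.induction_on with
  | zero => simp
  | succ k ih => rw [zpow_add_one, ih]; ext <;> simp
  | pred k ih => rw [zpow_sub_one, ih]; ext <;> simp <;> omega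

lemma eB_zpow (n : ℤ) : (⟨0, 0, 0, 1⟩ : NF) ^ n = ⟨0, 0, 0, n⟩ := by
  induction n using Int.induction_on with
  | zero => simp
  | succ k ih => rw [zpow_add_one, ih]; ext <;> simp
  | pred k ih => rw [zpow_sub_one, ih]; ext <;> simp <;> omega

end NF

/-! ### The homomorphism `φ : H3 →* NF` -/

def fgen : Fin 4 → NF := fun i =>
  if i = 0 then ⟨1, 0, 0, 0⟩ else if i = 1 then ⟨0, 1, 0, 0⟩
  else if i = 2 then ⟨0, 0, 1, 0⟩ else ⟨0, 0, 0, 1⟩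

@[simp] lemma fgen0 : fgen 0 = ⟨1, 0, 0, 0⟩ := rfl
@[simp] lemma fgen1 : fgen 1 = ⟨0, 1, 0, 0⟩ := rfl
@[simp] lemma fgen2 : fgen 2 = ⟨0, 0, 1, 0⟩ := rfl
@[simp] lemma fgen3 : fgen 3 = ⟨0, 0, 0, 1⟩ := rfl

set_option maxHeartbeats 1000000 in
lemma fgen_rels : ∀ r ∈ H3rels, FreeGroup.lift fgen r = 1 := by
  intro x hx
  simp only [H3rels, Set.mem_insert_iff, Set.mem_singleton_iff] at hx
  rcases hx with h | h | h | h | h | h <;> subst h <;>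
    simp only [_root_.map_mul, _root_.map_inv, map_commutatorElement, FreeGroup.lift_apply_of,
      commutatorElement_def, fgen0, fgen1, fgen2, fgen3] <;> (ext <;> simp)

def φ : H3 →* NF := PresentedGroup.toGroup fgen_rels

@[simp] lemma φ_P : φ H3.P = ⟨1, 0, 0, 0⟩ := PresentedGroup.toGroup.of fgen_rels
@[simp] lemma φ_Q : φ H3.Q = ⟨0, 1, 0, 0⟩ := PresentedGroup.toGroup.of fgen_rels
@[simp] lemma φ_R : φ H3.R = ⟨0, 0, 1, 0⟩ := PresentedGroup.toGroup.of fgen_rels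
@[simp] lemma φ_B : φ H3.B = ⟨0, 0, 0, 1⟩ := PresentedGroup.toGroup.of fgen_rels

/-! ### Relations in `H3` -/

namespace H3

lemma rel_eq_one {x : FreeGroup (Fin 4)} (h : x ∈ H3rels) :
    (QuotientGroup.mk x : H3) = 1 :=
  (QuotientGroup.eq_one_iff x).2 (Subgroup.subset_normalClosure h)

lemma relPQ : ⁅P, Q⁆ = B := by
  have h2 : (⁅P, Q⁆ * B⁻¹ : H3) = 1 :=
    rel_eq_one (show ⁅of (0 : Fin 4), of (1 : Fin 4)⁆ * (of (3 : Fin 4))⁻¹ ∈ H3rels by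
      simp [H3rels])
  rwa [mul_inv_eq_one] at h2

lemma relQR : ⁅Q, R⁆ = B := by
  have h2 : (⁅Q, R⁆ * B⁻¹ : H3) = 1 :=
    rel_eq_one (show ⁅of (1 : Fin 4), of (2 : Fin 4)⁆ * (of (3 : Fin 4))⁻¹ ∈ H3rels by
      simp [H3rels])
  rwa [mul_inv_eq_one] at h2

lemma relRP : ⁅R, P⁆ = B := by
  have h2 : (⁅R, P⁆ * B⁻¹ : H3) = 1 :=
    rel_eq_one (show ⁅of (2 : Fin 4), of (0 : Fin 4)⁆ * (of (3 : Fin 4))⁻¹ ∈ H3rels by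
      simp [H3rels])
  rwa [mul_inv_eq_one] at h2

lemma commPB : Commute P B :=
  commutatorElement_eq_one_iff_commute.1
    (rel_eq_one (show ⁅of (0 : Fin 4), of (3 : Fin 4)⁆ ∈ H3rels by simp [H3rels]))

lemma commQB : Commute Q B :=
  commutatorElement_eq_one_iff_commute.1
    (rel_eq_one (show ⁅of (1 : Fin 4), of (3 : Fin 4)⁆ ∈ H3rels by simp [H3rels]))

lemma commRB : Commute R B :=
  commutatorElement_eq_one_iff_commute.1
    (rel_eq_one (show ⁅of (2 : Fin 4), of (3 : Fin 4)⁆ ∈ H3rels by simp [H3rels]))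

/-- `B` is central in `H3`. -/
lemma central (g : H3) : Commute g B := by
  have : (Subgroup.centralizer {B} : Subgroup H3) = ⊤ := by
    rw [eq_top_iff, ← PresentedGroup.closure_range_of H3rels, Subgroup.closure_le]
    rintro _ ⟨i, rfl⟩
    rw [SetLike.mem_coe, Subgroup.mem_centralizer_iff]
    rintro h rfl
    fin_cases i
    · exact commPB.symm.eq
    · exact commQB.symm.eq
    · exact commRB.symm.eq
    · rfl
  have hg : g ∈ Subgroup.centralizer ({B} : Set H3) := this ▸ Subgroup.mem_top g
  exact (Subgroup.mem_centralizer_iff.1 hg B rfl).symm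

lemma rel_QP : Q * P = P * Q * B⁻¹ := by
  have h := relPQ
  rw [commutatorElement_def] at h
  have h1 : P * Q = B * (Q * P) := by rw [← h]; group
  calc Q * P = B⁻¹ * (P * Q) := by rw [h1]; group
    _ = P * Q * B⁻¹ := ((central (P * Q)).inv_right.eq).symm

lemma rel_RQ : R * Q = Q * R * B⁻¹ := by
  have h := relQR
  rw [commutatorElement_def] at h
  have h1 : Q * R = B * (R * Q) := by rw [← h]; group
  calc R * Q = B⁻¹ * (Q * R) := by rw [h1]; group
    _ = Q * R * B⁻¹ := ((central (Q * R)).inv_right.eq).symm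

lemma rel_RP : R * P = P * R * B := by
  have h := relRP
  rw [commutatorElement_def] at h
  have h1 : R * P = B * (P * R) := by rw [← h]; group
  calc R * P = B * (P * R) := h1
    _ = P * R * B := ((central (P * R)).eq).symm

/-! Power commutation lemmas. -/

lemma sQP (m n : ℤ) : Q ^ m * P ^ n = P ^ n * Q ^ m * B ^ (-(m * n)) := by
  have := key (x := P) (y := Q) (b := B⁻¹) (central P).inv_right (central Q).inv_right
    rel_QP m n
  rwa [inv_zpow, ← zpow_neg] at this

lemma sRQ (m n : ℤ) : R ^ m * Q ^ n = Q ^ n * R ^ m * B ^ (-(m * n)) := by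
  have := key (x := Q) (y := R) (b := B⁻¹) (central Q).inv_right (central R).inv_right
    rel_RQ m n
  rwa [inv_zpow, ← zpow_neg] at this

lemma sRP (m n : ℤ) : R ^ m * P ^ n = P ^ n * R ^ m * B ^ (m * n) :=
  key (central P) (central R) rel_RP m n

/-- Move a power of central `B` inside a right-associated product. -/
lemma cB (m : ℤ) (g z : H3) : B ^ m * (g * z) = g * (B ^ m * z) := by
  rw [← mul_assoc, ((central g).zpow_right m).symm.eq, mul_assoc]

/-- Right-associated swap lemmas with continuation. -/
lemma sQP' (m n : ℤ) (z : H3) :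
    Q ^ m * (P ^ n * z) = P ^ n * (Q ^ m * (B ^ (-(m * n)) * z)) := by
  rw [← mul_assoc, sQP, mul_assoc, mul_assoc]

lemma sRQ' (m n : ℤ) (z : H3) :
    R ^ m * (Q ^ n * z) = Q ^ n * (R ^ m * (B ^ (-(m * n)) * z)) := by
  rw [← mul_assoc, sRQ, mul_assoc, mul_assoc]

lemma sRP' (m n : ℤ) (z : H3) :
    R ^ m * (P ^ n * z) = P ^ n * (R ^ m * (B ^ (m * n) * z)) := by
  rw [← mul_assoc, sRP, mul_assoc, mul_assoc]

lemma merge (x : H3) (a b : ℤ) (z : H3) : x ^ a * (x ^ b * z) = x ^ (a + b) * z := by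
  rw [← mul_assoc, ← zpow_add]

lemma merget (x : H3) (a b : ℤ) : x ^ a * x ^ b = x ^ (a + b) := (zpow_add x a b).symm

lemma cBP (m n : ℤ) (z : H3) : B ^ m * (P ^ n * z) = P ^ n * (B ^ m * z) := cB m _ z
lemma cBQ (m n : ℤ) (z : H3) : B ^ m * (Q ^ n * z) = Q ^ n * (B ^ m * z) := cB m _ z
lemma cBR (m n : ℤ) (z : H3) : B ^ m * (R ^ n * z) = R ^ n * (B ^ m * z) := cB m _ z

lemma cBPt (m n : ℤ) : B ^ m * P ^ n = P ^ n * B ^ m :=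
  (((central P).zpow_left n).zpow_right m).symm.eq
lemma cBQt (m n : ℤ) : B ^ m * Q ^ n = Q ^ n * B ^ m :=
  (((central Q).zpow_left n).zpow_right m).symm.eq
lemma cBRt (m n : ℤ) : B ^ m * R ^ n = R ^ n * B ^ m :=
  (((central R).zpow_left n).zpow_right m).symm.eq

lemma sQPt (m n : ℤ) : Q ^ m * P ^ n = P ^ n * (Q ^ m * B ^ (-(m * n))) := by
  rw [sQP, mul_assoc]
lemma sRQt (m n : ℤ) : R ^ m * Q ^ n = Q ^ n * (R ^ m * B ^ (-(m * n))) := by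
  rw [sRQ, mul_assoc]
lemma sRPt (m n : ℤ) : R ^ m * P ^ n = P ^ n * (R ^ m * B ^ (m * n)) := by
  rw [sRP, mul_assoc]

end H3

/-! ### The normal form map `ψ : NF →* H3` -/

def ψfun : NF → H3 := fun a => H3.P ^ a.p * H3.Q ^ a.q * H3.R ^ a.r * H3.B ^ a.μ

lemma ψfun_mul (a b : NF) : ψfun (a * b) = ψfun a * ψfun b := by
  obtain ⟨p1, q1, r1, μ1⟩ := a
  obtain ⟨p2, q2, r2, μ2⟩ := b
  show H3.P ^ (p1 + p2) * H3.Q ^ (q1 + q2) * H3.R ^ (r1 + r2) *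
      H3.B ^ (μ1 + μ2 + r1 * p2 - q1 * p2 - r1 * q2) =
    H3.P ^ p1 * H3.Q ^ q1 * H3.R ^ r1 * H3.B ^ μ1 *
      (H3.P ^ p2 * H3.Q ^ q2 * H3.R ^ r2 * H3.B ^ μ2)
  simp only [mul_assoc]
  simp only [H3.sQP', H3.sRQ', H3.sRP', H3.sQPt, H3.sRQt, H3.sRPt,
    H3.cBP, H3.cBQ, H3.cBR, H3.cBPt, H3.cBQt, H3.cBRt, H3.merge, H3.merget]
  rw [show μ1 + μ2 + r1 * p2 - q1 * p2 - r1 * q2 =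
    -(q1 * p2) + (-(r1 * q2) + (r1 * p2 + (μ1 + μ2))) by ring]

def ψ : NF →* H3 := MonoidHom.mk' ψfun ψfun_mul

lemma ψ_surjective : Function.Surjective ψ := by
  rw [← MonoidHom.range_eq_top]
  rw [eq_top_iff, ← PresentedGroup.closure_range_of H3rels, Subgroup.closure_le]
  rintro _ ⟨i, rfl⟩
  fin_cases i
  · exact ⟨⟨1, 0, 0, 0⟩, by show ψfun ⟨1, 0, 0, 0⟩ = H3.P; simp [ψfun]⟩
  · exact ⟨⟨0, 1, 0, 0⟩, by show ψfun ⟨0, 1, 0, 0⟩ = H3.Q; simp [ψfun]⟩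
  · exact ⟨⟨0, 0, 1, 0⟩, by show ψfun ⟨0, 0, 1, 0⟩ = H3.R; simp [ψfun]⟩
  · exact ⟨⟨0, 0, 0, 1⟩, by show ψfun ⟨0, 0, 0, 1⟩ = H3.B; simp [ψfun]⟩

lemma φ_ψ (a : NF) : φ (ψ a) = a := by
  obtain ⟨p, q, r, μ⟩ := a
  show φ (H3.P ^ p * H3.Q ^ q * H3.R ^ r * H3.B ^ μ) = _
  simp only [MonoidHom.map_mul, MonoidHom.map_zpow,
    φ_P, φ_Q, φ_R, φ_B, NF.eP_zpow, NF.eQ_zpow, NF.eR_zpow, NF.eB_zpow]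
  ext <;> simp

/-- Every element of `G = ⟨P,Q,R,B | [P,Q]=[Q,R]=[R,P]=B, B central⟩` can be written
uniquely in the form `P^p * Q^q * R^r * B^μ` with `p, q, r, μ ∈ ℤ`. -/
theorem H3_normal_form (g : H3) :
    ∃! pqrμ : ℤ × ℤ × ℤ × ℤ,
      g = H3.P ^ pqrμ.1 * H3.Q ^ pqrμ.2.1 * H3.R ^ pqrμ.2.2.1 * H3.B ^ pqrμ.2.2.2 := by
  obtain ⟨a, rfl⟩ := ψ_surjective g
  refine ⟨(a.p, a.q, a.r, a.μ), rfl, ?_⟩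
  rintro ⟨p, q, r, μ⟩ h
  have h2 : ψ a = ψ ⟨p, q, r, μ⟩ := h
  have := congrArg φ h2
  rw [φ_ψ, φ_ψ] at this
  obtain ⟨_, _, _, _⟩ := a
  simp only [NF.mk.injEq] at this
  obtain ⟨h1, h2, h3, h4⟩ := this
  simp [h1, h2, h3, h4]
end

section
/- Let H_p be the group with presentation ⟨U, V, W | [U,V]=W², W^{2p}=1, [U,W]=[V,W]=1⟩ for an integer p. Then every element of H_p can be written uniquely in the form U^q V^r W^ν with q, r ∈ ℤ and 0 ≤ ν < 2|p| (for p ≠ 0; for p = 0, ν ∈ ℤ). -/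
open FreeGroup
open scoped commutatorElement

/-- The relators of the group `H_p = ⟨U,V,W | [U,V]=W², W^{2p}=1, W central⟩`,
with generators indexed by `Fin 3` as `U = 0`, `V = 1`, `W = 2`. -/
def HpRels (p : ℤ) : Set (FreeGroup (Fin 3)) :=
  { ⁅of (0 : Fin 3), of (1 : Fin 3)⁆ * (of (2 : Fin 3)) ^ (-2 : ℤ),
    (of (2 : Fin 3)) ^ (2 * p),
    ⁅of (0 : Fin 3), of (2 : Fin 3)⁆, ⁅of (1 : Fin 3), of (2 : Fin 3)⁆ }

/-- The group `H_p = π₁ Mapsₚ(S¹×S¹, S²)`. -/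
abbrev Hp (p : ℤ) : Type := PresentedGroup (HpRels p)

def Hp.U (p : ℤ) : Hp p := PresentedGroup.of 0
def Hp.V (p : ℤ) : Hp p := PresentedGroup.of 1
def Hp.W (p : ℤ) : Hp p := PresentedGroup.of 2

/-! ### The model group -/

@[ext] structure GpM (p : ℤ) where
  q : ℤ
  r : ℤ
  n : ZMod (2 * p.natAbs)

namespace GpM
variable {p : ℤ}

instance : Mul (GpM p) :=
  ⟨fun a b => ⟨a.q + b.q, a.r + b.r, a.n + b.n - ((2 * a.r * b.q : ℤ) : ZMod (2 * p.natAbs))⟩⟩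
instance : One (GpM p) := ⟨⟨0, 0, 0⟩⟩
instance : Inv (GpM p) :=
  ⟨fun a => ⟨-a.q, -a.r, -a.n - ((2 * a.r * a.q : ℤ) : ZMod (2 * p.natAbs))⟩⟩

@[simp] lemma mul_mk (a b : ℤ) (c : ZMod (2 * p.natAbs)) (a' b' : ℤ) (c' : ZMod (2 * p.natAbs)) :
    (⟨a, b, c⟩ : GpM p) * ⟨a', b', c'⟩
      = ⟨a + a', b + b', c + c' - ((2 * b * a' : ℤ) : ZMod (2 * p.natAbs))⟩ := rfl

@[simp] lemma inv_mk (a b : ℤ) (c : ZMod (2 * p.natAbs)) :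
    (⟨a, b, c⟩ : GpM p)⁻¹ = ⟨-a, -b, -c - ((2 * b * a : ℤ) : ZMod (2 * p.natAbs))⟩ := rfl

@[simp] lemma one_def : (1 : GpM p) = ⟨0, 0, 0⟩ := rfl

instance : Group (GpM p) where
  mul_assoc a b c := by
    obtain ⟨a1, a2, a3⟩ := a; obtain ⟨b1, b2, b3⟩ := b; obtain ⟨c1, c2, c3⟩ := c
    simp only [mul_mk, mk.injEq]
    refine ⟨by ring, by ring, by push_cast; ring⟩
  one_mul a := by
    obtain ⟨a1, a2, a3⟩ := a
    simp only [one_def, mul_mk, mk.injEq]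
    refine ⟨by ring, by ring, by push_cast; ring⟩
  mul_one a := by
    obtain ⟨a1, a2, a3⟩ := a
    simp only [one_def, mul_mk, mk.injEq]
    refine ⟨by ring, by ring, by push_cast; ring⟩
  inv_mul_cancel a := by
    obtain ⟨a1, a2, a3⟩ := a
    simp only [one_def, inv_mk, mul_mk, mk.injEq]
    refine ⟨by ring, by ring, by push_cast; ring⟩

lemma Uz (a : ℤ) : (⟨1, 0, 0⟩ : GpM p) ^ a = ⟨a, 0, 0⟩ := by
  induction a using Int.induction_on with
  | zero => simp
  | succ k ih =>
      rw [zpow_add_one, ih, mul_mk]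
      simp only [mk.injEq]
      refine ⟨trivial, by ring, by push_cast; ring⟩
  | pred k ih =>
      rw [zpow_sub_one, ih, inv_mk, mul_mk]
      simp only [mk.injEq]
      refine ⟨by ring, by ring, by push_cast; ring⟩

lemma Vz (a : ℤ) : (⟨0, 1, 0⟩ : GpM p) ^ a = ⟨0, a, 0⟩ := by
  induction a using Int.induction_on with
  | zero => simp
  | succ k ih =>
      rw [zpow_add_one, ih, mul_mk]
      simp only [mk.injEq]
      refine ⟨by ring, trivial, by push_cast; ring⟩
  | pred k ih =>
      rw [zpow_sub_one, ih, inv_mk, mul_mk]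
      simp only [mk.injEq]
      refine ⟨by ring, by ring, by push_cast; ring⟩

lemma Wz (a : ℤ) : (⟨0, 0, 1⟩ : GpM p) ^ a = ⟨0, 0, (a : ZMod (2 * p.natAbs))⟩ := by
  induction a using Int.induction_on with
  | zero => simp
  | succ k ih =>
      rw [zpow_add_one, ih, mul_mk]
      simp only [mk.injEq]
      refine ⟨by ring, by ring, by push_cast; ring⟩
  | pred k ih =>
      rw [zpow_sub_one, ih, inv_mk, mul_mk]
      simp only [mk.injEq]
      refine ⟨by ring, by ring, by push_cast; ring⟩

end GpM

/-! ### Relations in Hp -/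

namespace HpAux
variable (p : ℤ)

lemma relHp {r : FreeGroup (Fin 3)} (hr : r ∈ HpRels p) :
    PresentedGroup.mk (HpRels p) r = 1 :=
  (QuotientGroup.eq_one_iff r).mpr (Subgroup.subset_normalClosure hr)

lemma mk_of (i : Fin 3) : PresentedGroup.mk (HpRels p) (FreeGroup.of i) = PresentedGroup.of i := rfl

lemma rel1 : ⁅Hp.U p, Hp.V p⁆ * (Hp.W p) ^ (-2 : ℤ) = 1 := by
  have h := relHp p (show ⁅of (0 : Fin 3), of (1 : Fin 3)⁆ * (of (2 : Fin 3)) ^ (-2 : ℤ) ∈ HpRels p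
    from Set.mem_insert _ _)
  simpa [_root_.map_mul, map_zpow, map_commutatorElement, mk_of, Hp.U, Hp.V, Hp.W] using h

lemma rel2 : (Hp.W p) ^ (2 * p) = 1 := by
  have h := relHp p (show (of (2 : Fin 3)) ^ (2 * p) ∈ HpRels p by simp [HpRels])
  simpa [map_zpow, mk_of, Hp.W] using h

lemma rel3 : ⁅Hp.U p, Hp.W p⁆ = 1 := by
  have h := relHp p (show ⁅of (0 : Fin 3), of (2 : Fin 3)⁆ ∈ HpRels p by simp [HpRels])
  simpa [map_commutatorElement, mk_of, Hp.U, Hp.W] using h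

lemma rel4 : ⁅Hp.V p, Hp.W p⁆ = 1 := by
  have h := relHp p (show ⁅of (1 : Fin 3), of (2 : Fin 3)⁆ ∈ HpRels p by simp [HpRels])
  simpa [map_commutatorElement, mk_of, Hp.V, Hp.W] using h

lemma cUW : Commute (Hp.U p) (Hp.W p) := commutatorElement_eq_one_iff_commute.mp (rel3 p)
lemma cVW : Commute (Hp.V p) (Hp.W p) := commutatorElement_eq_one_iff_commute.mp (rel4 p)

/-- swap `W^m` past `U^a` -/
lemma cWU (m a : ℤ) : (Hp.W p) ^ m * (Hp.U p) ^ a = (Hp.U p) ^ a * (Hp.W p) ^ m :=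
  (((cUW p).zpow_zpow a m).symm).eq

lemma cWV (m a : ℤ) : (Hp.W p) ^ m * (Hp.V p) ^ a = (Hp.V p) ^ a * (Hp.W p) ^ m :=
  (((cVW p).zpow_zpow a m).symm).eq

lemma h2 : Hp.U p * Hp.V p * (Hp.U p)⁻¹ * (Hp.V p)⁻¹ = (Hp.W p) ^ (2 : ℤ) := by
  have h := rel1 p
  rw [commutatorElement_def] at h
  rw [mul_eq_one_iff_eq_inv] at h
  rw [h, ← zpow_neg, neg_neg]

lemma hUVW : Hp.U p * Hp.V p * (Hp.U p)⁻¹ = (Hp.W p) ^ (2 : ℤ) * Hp.V p := by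
  rw [← h2 p]; group

lemma conjb (b : ℤ) :
    Hp.U p * (Hp.V p) ^ b * (Hp.U p)⁻¹ = (Hp.W p) ^ (2 * b) * (Hp.V p) ^ b := by
  calc Hp.U p * (Hp.V p) ^ b * (Hp.U p)⁻¹
      = (Hp.U p * Hp.V p * (Hp.U p)⁻¹) ^ b := conj_zpow.symm
    _ = ((Hp.W p) ^ (2 : ℤ) * Hp.V p) ^ b := by rw [hUVW]
    _ = ((Hp.W p) ^ (2 : ℤ)) ^ b * (Hp.V p) ^ b := Commute.mul_zpow ((cVW p).symm.zpow_left 2) b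
    _ = (Hp.W p) ^ (2 * b) * (Hp.V p) ^ b := by rw [← zpow_mul]

lemma hU'VW : (Hp.U p)⁻¹ * Hp.V p * Hp.U p = (Hp.W p) ^ (-2 : ℤ) * Hp.V p := by
  have c : Commute ((Hp.U p)⁻¹) (((Hp.W p) ^ (2 : ℤ))⁻¹) := (((cUW p).zpow_right 2).inv_left).inv_right
  calc (Hp.U p)⁻¹ * Hp.V p * Hp.U p
      = (Hp.U p)⁻¹ * ((Hp.W p) ^ (2 : ℤ))⁻¹ * ((Hp.W p) ^ (2 : ℤ) * Hp.V p) * Hp.U p := by group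
    _ = (Hp.U p)⁻¹ * ((Hp.W p) ^ (2 : ℤ))⁻¹ * (Hp.U p * Hp.V p * (Hp.U p)⁻¹) * Hp.U p := by
          rw [hUVW]
    _ = ((Hp.W p) ^ (2 : ℤ))⁻¹ * (Hp.U p)⁻¹ * (Hp.U p * Hp.V p * (Hp.U p)⁻¹) * Hp.U p := by
          rw [c.eq]
    _ = (Hp.W p) ^ (-2 : ℤ) * Hp.V p := by group

lemma conjb' (b : ℤ) :
    (Hp.U p)⁻¹ * (Hp.V p) ^ b * Hp.U p = (Hp.W p) ^ (-(2 * b)) * (Hp.V p) ^ b := by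
  calc (Hp.U p)⁻¹ * (Hp.V p) ^ b * Hp.U p
      = (Hp.U p)⁻¹ * (Hp.V p) ^ b * ((Hp.U p)⁻¹)⁻¹ := by rw [inv_inv]
    _ = ((Hp.U p)⁻¹ * Hp.V p * ((Hp.U p)⁻¹)⁻¹) ^ b := conj_zpow.symm
    _ = ((Hp.W p) ^ (-2 : ℤ) * Hp.V p) ^ b := by rw [inv_inv, hU'VW]
    _ = ((Hp.W p) ^ (-2 : ℤ)) ^ b * (Hp.V p) ^ b := Commute.mul_zpow ((cVW p).symm.zpow_left _) b
    _ = (Hp.W p) ^ (-(2 * b)) * (Hp.V p) ^ b := by rw [← zpow_mul, neg_mul]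

lemma stepR (b : ℤ) :
    (Hp.V p) ^ b * Hp.U p = Hp.U p * (Hp.V p) ^ b * (Hp.W p) ^ (-(2 * b)) := by
  have h : (Hp.V p) ^ b * Hp.U p = Hp.U p * ((Hp.W p) ^ (-(2 * b)) * (Hp.V p) ^ b) := by
    rw [← conjb' p b]; group
  rw [h, cWV]
  group

lemma stepR' (b : ℤ) :
    (Hp.V p) ^ b * (Hp.U p)⁻¹ = (Hp.U p)⁻¹ * (Hp.V p) ^ b * (Hp.W p) ^ (2 * b) := by
  have h : (Hp.V p) ^ b * (Hp.U p)⁻¹ = (Hp.U p)⁻¹ * ((Hp.W p) ^ (2 * b) * (Hp.V p) ^ b) := by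
    rw [← conjb p b]; group
  rw [h, cWV]
  group

lemma LVU (b : ℤ) : ∀ d : ℤ,
    (Hp.V p) ^ b * (Hp.U p) ^ d = (Hp.U p) ^ d * (Hp.V p) ^ b * (Hp.W p) ^ (-(2 * b * d)) := by
  intro d
  induction d using Int.induction_on with
  | zero => simp
  | succ k ih =>
      have e : (-(2 * b)) + -(2 * b * (k : ℤ)) = -(2 * b * ((k : ℤ) + 1)) := by ring
      calc (Hp.V p) ^ b * (Hp.U p) ^ ((k : ℤ) + 1)
          = (Hp.V p) ^ b * (Hp.U p) ^ (k : ℤ) * Hp.U p := by rw [zpow_add_one, ← mul_assoc]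
        _ = (Hp.U p) ^ (k : ℤ) * (Hp.V p) ^ b * (Hp.W p) ^ (-(2 * b * (k : ℤ))) * Hp.U p := by
              rw [ih]
        _ = (Hp.U p) ^ (k : ℤ) * (Hp.V p) ^ b * ((Hp.W p) ^ (-(2 * b * (k : ℤ))) * (Hp.U p) ^ (1 : ℤ)) := by
              rw [zpow_one]; group
        _ = (Hp.U p) ^ (k : ℤ) * (Hp.V p) ^ b * ((Hp.U p) ^ (1 : ℤ) * (Hp.W p) ^ (-(2 * b * (k : ℤ)))) := by
              rw [cWU]
        _ = (Hp.U p) ^ (k : ℤ) * ((Hp.V p) ^ b * Hp.U p) * (Hp.W p) ^ (-(2 * b * (k : ℤ))) := by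
              rw [zpow_one]; group
        _ = (Hp.U p) ^ (k : ℤ) * (Hp.U p * (Hp.V p) ^ b * (Hp.W p) ^ (-(2 * b))) * (Hp.W p) ^ (-(2 * b * (k : ℤ))) := by
              rw [stepR]
        _ = (Hp.U p) ^ (k : ℤ) * Hp.U p * (Hp.V p) ^ b * ((Hp.W p) ^ (-(2 * b)) * (Hp.W p) ^ (-(2 * b * (k : ℤ)))) := by
              group
        _ = (Hp.U p) ^ ((k : ℤ) + 1) * (Hp.V p) ^ b * (Hp.W p) ^ (-(2 * b * ((k : ℤ) + 1))) := by
              rw [← zpow_add_one, ← zpow_add, e]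
  | pred k ih =>
      have e : (2 * b) + -(2 * b * (-(k : ℤ))) = -(2 * b * (-(k : ℤ) - 1)) := by ring
      calc (Hp.V p) ^ b * (Hp.U p) ^ (-(k : ℤ) - 1)
          = (Hp.V p) ^ b * (Hp.U p) ^ (-(k : ℤ)) * (Hp.U p)⁻¹ := by rw [zpow_sub_one, ← mul_assoc]
        _ = (Hp.U p) ^ (-(k : ℤ)) * (Hp.V p) ^ b * (Hp.W p) ^ (-(2 * b * (-(k : ℤ)))) * (Hp.U p)⁻¹ := by
              rw [ih]
        _ = (Hp.U p) ^ (-(k : ℤ)) * (Hp.V p) ^ b * ((Hp.W p) ^ (-(2 * b * (-(k : ℤ)))) * (Hp.U p) ^ (-1 : ℤ)) := by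
              rw [zpow_neg_one]; group
        _ = (Hp.U p) ^ (-(k : ℤ)) * (Hp.V p) ^ b * ((Hp.U p) ^ (-1 : ℤ) * (Hp.W p) ^ (-(2 * b * (-(k : ℤ))))) := by
              rw [cWU]
        _ = (Hp.U p) ^ (-(k : ℤ)) * ((Hp.V p) ^ b * (Hp.U p)⁻¹) * (Hp.W p) ^ (-(2 * b * (-(k : ℤ)))) := by
              rw [zpow_neg_one]; group
        _ = (Hp.U p) ^ (-(k : ℤ)) * ((Hp.U p)⁻¹ * (Hp.V p) ^ b * (Hp.W p) ^ (2 * b)) * (Hp.W p) ^ (-(2 * b * (-(k : ℤ)))) := by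
              rw [stepR']
        _ = (Hp.U p) ^ (-(k : ℤ)) * (Hp.U p)⁻¹ * (Hp.V p) ^ b * ((Hp.W p) ^ (2 * b) * (Hp.W p) ^ (-(2 * b * (-(k : ℤ))))) := by
              group
        _ = (Hp.U p) ^ (-(k : ℤ) - 1) * (Hp.V p) ^ b * (Hp.W p) ^ (-(2 * b * (-(k : ℤ) - 1))) := by
              rw [← zpow_sub_one, ← zpow_add, e]

lemma nf_mul (a b c d e f : ℤ) :
    ((Hp.U p) ^ a * (Hp.V p) ^ b * (Hp.W p) ^ c) * ((Hp.U p) ^ d * (Hp.V p) ^ e * (Hp.W p) ^ f)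
      = (Hp.U p) ^ (a + d) * (Hp.V p) ^ (b + e) * (Hp.W p) ^ (c + f - 2 * b * d) := by
  have e1 : (-(2 * b * d)) + (c + f) = c + f - 2 * b * d := by ring
  calc ((Hp.U p) ^ a * (Hp.V p) ^ b * (Hp.W p) ^ c) * ((Hp.U p) ^ d * (Hp.V p) ^ e * (Hp.W p) ^ f)
      = (Hp.U p) ^ a * (Hp.V p) ^ b * ((Hp.W p) ^ c * (Hp.U p) ^ d) * ((Hp.V p) ^ e * (Hp.W p) ^ f) := by
        group
    _ = (Hp.U p) ^ a * (Hp.V p) ^ b * ((Hp.U p) ^ d * (Hp.W p) ^ c) * ((Hp.V p) ^ e * (Hp.W p) ^ f) := by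
        rw [cWU]
    _ = (Hp.U p) ^ a * ((Hp.V p) ^ b * (Hp.U p) ^ d) * ((Hp.W p) ^ c * (Hp.V p) ^ e) * (Hp.W p) ^ f := by
        group
    _ = (Hp.U p) ^ a * ((Hp.U p) ^ d * (Hp.V p) ^ b * (Hp.W p) ^ (-(2 * b * d))) * ((Hp.V p) ^ e * (Hp.W p) ^ c) * (Hp.W p) ^ f := by
        rw [LVU, cWV]
    _ = (Hp.U p) ^ a * (Hp.U p) ^ d * (Hp.V p) ^ b * ((Hp.W p) ^ (-(2 * b * d)) * (Hp.V p) ^ e) * ((Hp.W p) ^ c * (Hp.W p) ^ f) := by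
        group
    _ = (Hp.U p) ^ a * (Hp.U p) ^ d * (Hp.V p) ^ b * ((Hp.V p) ^ e * (Hp.W p) ^ (-(2 * b * d))) * ((Hp.W p) ^ c * (Hp.W p) ^ f) := by
        rw [cWV]
    _ = ((Hp.U p) ^ a * (Hp.U p) ^ d) * ((Hp.V p) ^ b * (Hp.V p) ^ e) * ((Hp.W p) ^ (-(2 * b * d)) * ((Hp.W p) ^ c * (Hp.W p) ^ f)) := by
        group
    _ = (Hp.U p) ^ (a + d) * (Hp.V p) ^ (b + e) * (Hp.W p) ^ (c + f - 2 * b * d) := by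
        rw [← zpow_add, ← zpow_add, ← zpow_add, ← zpow_add, e1]

lemma nf_inv (a b c : ℤ) :
    ((Hp.U p) ^ a * (Hp.V p) ^ b * (Hp.W p) ^ c)⁻¹
      = (Hp.U p) ^ (-a) * (Hp.V p) ^ (-b) * (Hp.W p) ^ (-(2 * a * b) - c) := by
  have h : ((Hp.U p) ^ a * (Hp.V p) ^ b * (Hp.W p) ^ c)
      * ((Hp.U p) ^ (-a) * (Hp.V p) ^ (-b) * (Hp.W p) ^ (-(2 * a * b) - c)) = 1 := by
    rw [nf_mul]
    have e1 : a + -a = 0 := by ring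
    have e2 : b + -b = 0 := by ring
    have e3 : c + (-(2 * a * b) - c) - 2 * b * -a = 0 := by ring
    rw [e1, e2, e3]
    simp
  exact inv_eq_of_mul_eq_one_right h

lemma exists_nf (g : Hp p) :
    ∃ a b c : ℤ, g = (Hp.U p) ^ a * (Hp.V p) ^ b * (Hp.W p) ^ c := by
  let S : Subgroup (Hp p) :=
    { carrier := {g | ∃ a b c : ℤ, g = (Hp.U p) ^ a * (Hp.V p) ^ b * (Hp.W p) ^ c}
      one_mem' := ⟨0, 0, 0, by simp⟩
      mul_mem' := by
        rintro x y ⟨a, b, c, rfl⟩ ⟨d, e, f, rfl⟩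
        exact ⟨a + d, b + e, c + f - 2 * b * d, nf_mul p a b c d e f⟩
      inv_mem' := by
        rintro x ⟨a, b, c, rfl⟩
        exact ⟨-a, -b, -(2 * a * b) - c, nf_inv p a b c⟩ }
  refine PresentedGroup.generated_by _ S (fun j => ?_) g
  fin_cases j
  · exact ⟨1, 0, 0, by simp [Hp.U]⟩
  · exact ⟨0, 1, 0, by simp [Hp.V]⟩
  · exact ⟨0, 0, 1, by simp [Hp.W]⟩

lemma Wper : (Hp.W p) ^ (2 * |p|) = 1 := by
  rcases abs_choice p with h | h
  · rw [h]; exact rel2 p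
  · rw [h]
    have e : 2 * -p = -(2 * p) := by ring
    rw [e, zpow_neg, rel2 p, inv_one]

lemma Wmod (c : ℤ) : (Hp.W p) ^ c = (Hp.W p) ^ (c % (2 * |p|)) := by
  conv_lhs => rw [← Int.emod_add_mul_ediv c (2 * |p|)]
  rw [zpow_add, zpow_mul, Wper, one_zpow, mul_one]

/-! ### The homomorphism to the model -/

def gen : Fin 3 → GpM p
  | 0 => ⟨1, 0, 0⟩
  | 1 => ⟨0, 1, 0⟩
  | 2 => ⟨0, 0, 1⟩

lemma hgen : ∀ r ∈ HpRels p, FreeGroup.lift (gen p) r = 1 := by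
  intro r hr
  simp only [HpRels, Set.mem_insert_iff, Set.mem_singleton_iff] at hr
  rcases hr with rfl | rfl | rfl | rfl
  · simp only [_root_.map_mul, map_zpow, _root_.map_inv, map_commutatorElement,
      FreeGroup.lift_apply_of, commutatorElement_def, gen, GpM.Wz]
    simp only [GpM.mul_mk, GpM.inv_mk, GpM.one_def]
    refine GpM.ext ?_ ?_ ?_
    · ring
    · ring
    · push_cast; ring
  · simp only [map_zpow, FreeGroup.lift_apply_of, gen, GpM.Wz, GpM.one_def, GpM.mk.injEq]
    refine ⟨trivial, trivial, ?_⟩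
    rw [ZMod.intCast_zmod_eq_zero_iff_dvd]
    have : ((2 * p.natAbs : ℕ) : ℤ) = (2 * p).natAbs := by
      push_cast [Int.natAbs_mul]
      simp
    rw [this]
    exact Int.natAbs_dvd.mpr dvd_rfl
  · simp only [_root_.map_mul, _root_.map_inv, map_commutatorElement, FreeGroup.lift_apply_of,
      commutatorElement_def, gen]
    simp only [GpM.mul_mk, GpM.inv_mk, GpM.one_def]
    refine GpM.ext ?_ ?_ ?_
    · ring
    · ring
    · push_cast; ring
  · simp only [_root_.map_mul, _root_.map_inv, map_commutatorElement, FreeGroup.lift_apply_of,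
      commutatorElement_def, gen]
    simp only [GpM.mul_mk, GpM.inv_mk, GpM.one_def]
    refine GpM.ext ?_ ?_ ?_
    · ring
    · ring
    · push_cast; ring

noncomputable def phi : Hp p →* GpM p := PresentedGroup.toGroup (hgen p)

lemma phi_nf (a b c : ℤ) :
    phi p ((Hp.U p) ^ a * (Hp.V p) ^ b * (Hp.W p) ^ c)
      = ⟨a, b, (c : ZMod (2 * p.natAbs))⟩ := by
  have hU : phi p (Hp.U p) = ⟨1, 0, 0⟩ := PresentedGroup.toGroup.of (hgen p)
  have hV : phi p (Hp.V p) = ⟨0, 1, 0⟩ := PresentedGroup.toGroup.of (hgen p)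
  have hW : phi p (Hp.W p) = ⟨0, 0, 1⟩ := PresentedGroup.toGroup.of (hgen p)
  rw [_root_.map_mul, _root_.map_mul, map_zpow, map_zpow, map_zpow, hU, hV, hW,
    GpM.Uz, GpM.Vz, GpM.Wz, GpM.mul_mk, GpM.mul_mk]
  simp only [GpM.mk.injEq]
  refine ⟨by ring, by ring, by push_cast; ring⟩

end HpAux

/-- Every element of `H_p = ⟨U,V,W | [U,V]=W², W^{2p}=1, W central⟩` can be written
uniquely as `U^q V^r W^ν` with `q, r, ν ∈ ℤ`, where for `p ≠ 0` the exponent `ν`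
is normalized by `0 ≤ ν < 2|p|` (for `p = 0`, `ν` is an arbitrary integer). -/
theorem Hp_normal_form (p : ℤ) (g : Hp p) :
    ∃! qrν : ℤ × ℤ × ℤ,
      (p ≠ 0 → 0 ≤ qrν.2.2 ∧ qrν.2.2 < 2 * |p|) ∧
      g = Hp.U p ^ qrν.1 * Hp.V p ^ qrν.2.1 * Hp.W p ^ qrν.2.2 := by
  obtain ⟨a, b, c, rfl⟩ := HpAux.exists_nf p g
  have hcast : ((2 * p.natAbs : ℕ) : ℤ) = 2 * |p| := by
    push_cast
    ring
  refine ⟨⟨a, b, c % (2 * |p|)⟩, ⟨?_, ?_⟩, ?_⟩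
  · intro hp0
    have hpos : 0 < 2 * |p| := by
      have := abs_pos.mpr hp0
      omega
    exact ⟨Int.emod_nonneg c (by omega), Int.emod_lt_of_pos c hpos⟩
  · simp only
    rw [← HpAux.Wmod]
  · rintro ⟨a', b', c'⟩ ⟨hcon, heq⟩
    simp only at hcon heq ⊢
    have h := congrArg (HpAux.phi p) heq.symm
    rw [HpAux.phi_nf, HpAux.phi_nf] at h
    rw [GpM.mk.injEq] at h
    obtain ⟨ha, hb, hc⟩ := h
    have hmod : c' % (2 * |p|) = c % (2 * |p|) := by
      have h2 := (ZMod.intCast_eq_intCast_iff' c' c (2 * p.natAbs)).mp hc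
      rwa [hcast] at h2
    by_cases hp0 : p = 0
    · subst hp0
      simp only [abs_zero, mul_zero, Int.emod_zero] at hmod ⊢
      exact Prod.ext ha (Prod.ext hb hmod)
    · obtain ⟨h0, h1⟩ := hcon hp0
      have hc' : c' % (2 * |p|) = c' := Int.emod_eq_of_lt h0 h1
      exact Prod.ext ha (Prod.ext hb (hc' ▸ hmod))
end

section
/- In the group H_p = ⟨U, V, W | [U,V]=W², W^{2p}=1, W central⟩, two elements U^q V^r W^ν and U^{q*} V^{r*} W^{ν*} are conjugate if and only if q = q*, r = r*, and ν ≡ ν* (mod 2·gcd(p,q,r)). -/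
@[ext] structure Model (p : ℤ) where
  a : ℤ
  b : ℤ
  c : ZMod (2*p).natAbs

namespace Model
variable {p : ℤ}

instance : Mul (Model p) := ⟨fun x y => ⟨x.a + y.a, x.b + y.b, x.c + y.c - ((2*x.b*y.a : ℤ) : ZMod (2*p).natAbs)⟩⟩
instance : One (Model p) := ⟨⟨0,0,0⟩⟩
instance : Inv (Model p) := ⟨fun x => ⟨-x.a, -x.b, -x.c - ((2*x.a*x.b : ℤ) : ZMod (2*p).natAbs)⟩⟩

@[simp] lemma mul_a (x y : Model p) : (x*y).a = x.a + y.a := rfl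
@[simp] lemma mul_b (x y : Model p) : (x*y).b = x.b + y.b := rfl
@[simp] lemma mul_c (x y : Model p) : (x*y).c = x.c + y.c - ((2*x.b*y.a : ℤ) : ZMod (2*p).natAbs) := rfl
@[simp] lemma one_a : (1 : Model p).a = 0 := rfl
@[simp] lemma one_b : (1 : Model p).b = 0 := rfl
@[simp] lemma one_c : (1 : Model p).c = 0 := rfl
@[simp] lemma inv_a (x : Model p) : (x⁻¹).a = -x.a := rfl
@[simp] lemma inv_b (x : Model p) : (x⁻¹).b = -x.b := rfl
@[simp] lemma inv_c (x : Model p) : (x⁻¹).c = -x.c - ((2*x.a*x.b : ℤ) : ZMod (2*p).natAbs) := rfl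

instance : Group (Model p) where
  mul_assoc x y z := by ext <;> simp <;> push_cast <;> ring
  one_mul x := by ext <;> simp
  mul_one x := by ext <;> simp
  inv_mul_cancel x := by ext <;> simp <;> push_cast <;> ring

lemma U_zpow (n : ℤ) : (⟨1,0,0⟩ : Model p)^n = ⟨n,0,0⟩ := by
  induction n using Int.induction_on with
  | zero => rfl
  | succ n ih => rw [zpow_add_one, ih]; ext <;> simp <;> push_cast <;> ring
  | pred n ih => rw [zpow_sub_one, ih]; ext <;> simp <;> push_cast <;> ring

lemma V_zpow (n : ℤ) : (⟨0,1,0⟩ : Model p)^n = ⟨0,n,0⟩ := by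
  induction n using Int.induction_on with
  | zero => rfl
  | succ n ih => rw [zpow_add_one, ih]; ext <;> simp <;> push_cast <;> ring
  | pred n ih => rw [zpow_sub_one, ih]; ext <;> simp <;> push_cast <;> ring

lemma W_zpow (n : ℤ) : (⟨0,0,1⟩ : Model p)^n = ⟨0,0,(n : ZMod (2*p).natAbs)⟩ := by
  induction n using Int.induction_on with
  | zero => ext <;> simp
  | succ n ih => rw [zpow_add_one, ih]; ext <;> simp <;> push_cast <;> ring
  | pred n ih => rw [zpow_sub_one, ih]; ext <;> simp <;> push_cast <;> ring

lemma W_pow (n : ℕ) : (⟨0,0,1⟩ : Model p)^n = ⟨0,0,(n : ZMod (2*p).natAbs)⟩ := by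
  induction n with
  | zero => ext <;> simp
  | succ n ih => rw [pow_succ, ih]; ext <;> simp <;> push_cast <;> ring

end Model



open FreeGroup
open scoped commutatorElement

def modelGen (p : ℤ) : Fin 3 → Model p := ![⟨1,0,0⟩, ⟨0,1,0⟩, ⟨0,0,1⟩]

@[simp] lemma modelGen_0 (p : ℤ) : modelGen p 0 = ⟨1,0,0⟩ := rfl
@[simp] lemma modelGen_1 (p : ℤ) : modelGen p 1 = ⟨0,1,0⟩ := rfl
@[simp] lemma modelGen_2 (p : ℤ) : modelGen p 2 = ⟨0,0,1⟩ := rfl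

lemma modelGen_rels (p : ℤ) : ∀ r ∈ HpRels p, FreeGroup.lift (modelGen p) r = 1 := by
  have h0 : FreeGroup.lift (modelGen p) (of (0:Fin 3)) = ⟨1,0,0⟩ := FreeGroup.lift_apply_of
  have h1 : FreeGroup.lift (modelGen p) (of (1:Fin 3)) = ⟨0,1,0⟩ := FreeGroup.lift_apply_of
  have h2 : FreeGroup.lift (modelGen p) (of (2:Fin 3)) = ⟨0,0,1⟩ := FreeGroup.lift_apply_of
  intro r hr
  simp only [HpRels, Set.mem_insert_iff, Set.mem_singleton_iff] at hr
  have hp2 : ((2*p : ℤ) : ZMod (2*p).natAbs) = 0 :=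
    (ZMod.intCast_zmod_eq_zero_iff_dvd _ _).2 (Int.natAbs_dvd.2 dvd_rfl)
  rcases hr with h | h | h | h <;> subst h <;>
    simp only [_root_.map_mul, _root_.map_zpow, _root_.map_inv, commutatorElement_def, h0, h1, h2,
      Model.W_zpow, Model.W_pow, hp2, modelGen_0, modelGen_1, modelGen_2] <;> ext <;> simp <;> push_cast <;> ring_nf

noncomputable def phi (p : ℤ) : Hp p →* Model p := PresentedGroup.toGroup (modelGen_rels p)

lemma phi_image (p q r ν : ℤ) :
    phi p (Hp.U p ^ q * Hp.V p ^ r * Hp.W p ^ ν) = ⟨q, r, (ν : ZMod (2*p).natAbs)⟩ := by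
  have h0 : phi p (Hp.U p) = ⟨1,0,0⟩ := PresentedGroup.toGroup.of (modelGen_rels p)
  have h1 : phi p (Hp.V p) = ⟨0,1,0⟩ := PresentedGroup.toGroup.of (modelGen_rels p)
  have h2 : phi p (Hp.W p) = ⟨0,0,1⟩ := PresentedGroup.toGroup.of (modelGen_rels p)
  rw [_root_.map_mul, _root_.map_mul, _root_.map_zpow, _root_.map_zpow, _root_.map_zpow,
    h0, h1, h2, Model.U_zpow, Model.V_zpow, Model.W_zpow]
  ext <;> simp

section rels
variable {p : ℤ}

lemma Hp.rel (x : FreeGroup (Fin 3)) (hx : x ∈ HpRels p) :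
    PresentedGroup.mk (HpRels p) x = 1 :=
  (QuotientGroup.eq_one_iff _).2 (Subgroup.subset_normalClosure hx)

lemma Hp.rel_UV : ⁅Hp.U p, Hp.V p⁆ = Hp.W p ^ (2 : ℤ) := by
  have := Hp.rel (p := p) _ (Set.mem_insert _ _)
  rw [_root_.map_mul, _root_.map_zpow, map_commutatorElement] at this
  have h := mul_eq_one_iff_eq_inv.1 this
  show ⁅PresentedGroup.mk (HpRels p) (of 0), PresentedGroup.mk (HpRels p) (of 1)⁆ =
    PresentedGroup.mk (HpRels p) (of 2) ^ (2:ℤ)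
  rw [h, ← zpow_neg]
  norm_num

lemma Hp.rel_W2p : Hp.W p ^ (2 * p) = 1 := by
  have := Hp.rel (p := p) _ (Set.mem_insert_iff.2 (Or.inr (Set.mem_insert _ _)))
  rw [_root_.map_zpow] at this
  exact this

lemma Hp.commUW : Commute (Hp.U p) (Hp.W p) := by
  have := Hp.rel (p := p) _ (show ⁅of (0:Fin 3), of (2:Fin 3)⁆ ∈ HpRels p by
    simp [HpRels])
  rw [map_commutatorElement] at this
  exact commutatorElement_eq_one_iff_commute.1 this

lemma Hp.commVW : Commute (Hp.V p) (Hp.W p) := by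
  have := Hp.rel (p := p) _ (show ⁅of (1:Fin 3), of (2:Fin 3)⁆ ∈ HpRels p by
    simp [HpRels])
  rw [map_commutatorElement] at this
  exact commutatorElement_eq_one_iff_commute.1 this

end rels

section NF
variable (p : ℤ)

lemma Hp.hWU : ∀ m n : ℤ, Hp.W p ^ m * Hp.U p ^ n = Hp.U p ^ n * Hp.W p ^ m :=
  fun m n => ((Hp.commUW (p := p)).symm.zpow_zpow m n).eq

lemma Hp.hWV : ∀ m n : ℤ, Hp.W p ^ m * Hp.V p ^ n = Hp.V p ^ n * Hp.W p ^ m :=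
  fun m n => ((Hp.commVW (p := p)).symm.zpow_zpow m n).eq

lemma Hp.hVU : Hp.V p * Hp.U p = Hp.U p * Hp.W p ^ (-2:ℤ) * Hp.V p := by
  set U := Hp.U p; set V := Hp.V p; set W := Hp.W p
  have h : U * V * U⁻¹ * V⁻¹ = W ^ (2:ℤ) := by
    have := Hp.rel_UV (p := p); rwa [commutatorElement_def] at this
  have hc := ((Hp.commUW (p := p)).zpow_right (-2:ℤ)).eq
  calc V * U = (U * V * U⁻¹ * V⁻¹)⁻¹ * (U * V) := by group
    _ = (W ^ (2:ℤ))⁻¹ * (U * V) := by rw [h]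
    _ = W ^ (-2:ℤ) * U * V := by group
    _ = U * W ^ (-2:ℤ) * V := by rw [← hc]

lemma Hp.hVWs : ∀ m : ℤ, Hp.V p * Hp.W p ^ m = Hp.W p ^ m * Hp.V p :=
  fun m => ((Hp.commVW (p := p)).zpow_right m).eq

lemma Hp.hV'U : (Hp.V p)⁻¹ * Hp.U p = Hp.U p * Hp.W p ^ (2:ℤ) * (Hp.V p)⁻¹ := by
  set U := Hp.U p; set V := Hp.V p; set W := Hp.W p
  have key : V * (U * W ^ (2:ℤ) * V⁻¹) = U := by
    calc V * (U * W ^ (2:ℤ) * V⁻¹) = (V * U) * (W ^ (2:ℤ) * V⁻¹) := by group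
      _ = (U * W ^ (-2:ℤ) * V) * (W ^ (2:ℤ) * V⁻¹) := by rw [Hp.hVU]
      _ = U * W ^ (-2:ℤ) * (V * W ^ (2:ℤ)) * V⁻¹ := by group
      _ = U * W ^ (-2:ℤ) * (W ^ (2:ℤ) * V) * V⁻¹ := by rw [Hp.hVWs]
      _ = U := by group
  conv_lhs => rw [← key]
  group

lemma Hp.keyL : ∀ n : ℤ, Hp.V p ^ n * Hp.U p = Hp.U p * Hp.W p ^ (-2*n) * Hp.V p ^ n := by
  set U := Hp.U p with hU; set V := Hp.V p with hV; set W := Hp.W p with hW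
  intro n
  induction n using Int.induction_on with
  | zero => group
  | succ n ih =>
    calc V ^ ((n:ℤ)+1) * U = V ^ (n:ℤ) * (V * U) := by group
      _ = V ^ (n:ℤ) * (U * W ^ (-2:ℤ) * V) := by rw [Hp.hVU]
      _ = (V ^ (n:ℤ) * U) * (W ^ (-2:ℤ) * V) := by group
      _ = (U * W ^ (-2*(n:ℤ)) * V ^ (n:ℤ)) * (W ^ (-2:ℤ) * V) := by rw [ih]
      _ = U * (W ^ (-2*(n:ℤ)) * (V ^ (n:ℤ) * W ^ (-2:ℤ)) * V) := by group
      _ = U * (W ^ (-2*(n:ℤ)) * (W ^ (-2:ℤ) * V ^ (n:ℤ)) * V) := by rw [Hp.hWV]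
      _ = U * W ^ (-2*((n:ℤ)+1)) * V ^ ((n:ℤ)+1) := by group
  | pred n ih =>
    calc V ^ (-(n:ℤ)-1) * U = V ^ (-(n:ℤ)) * (V⁻¹ * U) := by group
      _ = V ^ (-(n:ℤ)) * (U * W ^ (2:ℤ) * V⁻¹) := by rw [Hp.hV'U]
      _ = (V ^ (-(n:ℤ)) * U) * (W ^ (2:ℤ) * V⁻¹) := by group
      _ = (U * W ^ (-2*(-(n:ℤ))) * V ^ (-(n:ℤ))) * (W ^ (2:ℤ) * V⁻¹) := by rw [ih]
      _ = U * (W ^ (-2*(-(n:ℤ))) * (V ^ (-(n:ℤ)) * W ^ (2:ℤ)) * V⁻¹) := by group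
      _ = U * (W ^ (-2*(-(n:ℤ))) * (W ^ (2:ℤ) * V ^ (-(n:ℤ))) * V⁻¹) := by rw [Hp.hWV]
      _ = U * W ^ (-2*(-(n:ℤ)-1)) * V ^ (-(n:ℤ)-1) := by group

lemma Hp.key : ∀ m n : ℤ, Hp.V p ^ n * Hp.U p ^ m
    = Hp.U p ^ m * Hp.W p ^ (-2*m*n) * Hp.V p ^ n := by
  set U := Hp.U p with hU; set V := Hp.V p with hV; set W := Hp.W p with hW
  intro m n
  have hc : V ^ n * U * (V ^ n)⁻¹ = U * W ^ (-2*n) := by rw [Hp.keyL, ← hU, ← hV, ← hW]; group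
  have hmul := ((Hp.commUW (p := p)).zpow_right (-2*n)).mul_zpow m
  have hexp : (-2*n)*m = -2*m*n := by ring
  calc V ^ n * U ^ m = (V ^ n * U * (V ^ n)⁻¹) ^ m * V ^ n := by rw [conj_zpow]; group
    _ = (U * W ^ (-2*n)) ^ m * V ^ n := by rw [hc]
    _ = U ^ m * (W ^ (-2*n)) ^ m * V ^ n := by rw [hmul]
    _ = U ^ m * W ^ (-2*m*n) * V ^ n := by rw [← zpow_mul, hexp]

lemma Hp.mulNF (a b c a' b' c' : ℤ) :
    (Hp.U p ^ a * Hp.V p ^ b * Hp.W p ^ c) * (Hp.U p ^ a' * Hp.V p ^ b' * Hp.W p ^ c')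
    = Hp.U p ^ (a+a') * Hp.V p ^ (b+b') * Hp.W p ^ (c+c'-2*a'*b) := by
  set U := Hp.U p with hU; set V := Hp.V p with hV; set W := Hp.W p with hW
  calc (U^a*V^b*W^c)*(U^a'*V^b'*W^c')
      = U^a*V^b*(W^c*U^a')*(V^b'*W^c') := by group
    _ = U^a*V^b*(U^a'*W^c)*(V^b'*W^c') := by rw [Hp.hWU]
    _ = U^a*(V^b*U^a')*(W^c*V^b')*W^c' := by group
    _ = U^a*(U^a'*W^(-2*a'*b)*V^b)*(W^c*V^b')*W^c' := by rw [Hp.key]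
    _ = U^a*(U^a'*W^(-2*a'*b)*V^b)*(V^b'*W^c)*W^c' := by rw [Hp.hWV]
    _ = U^(a+a')*(W^(-2*a'*b)*V^(b+b'))*W^(c+c') := by group
    _ = U^(a+a')*(V^(b+b')*W^(-2*a'*b))*W^(c+c') := by rw [Hp.hWV]
    _ = U^(a+a')*V^(b+b')*W^(c+c'-2*a'*b) := by group

lemma Hp.invNF (a b c : ℤ) :
    (Hp.U p ^ a * Hp.V p ^ b * Hp.W p ^ c)⁻¹
    = Hp.U p ^ (-a) * Hp.V p ^ (-b) * Hp.W p ^ (-c-2*a*b) := by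
  apply inv_eq_of_mul_eq_one_left
  rw [Hp.mulNF]
  have h1 : (-a) + a = 0 := by ring
  have h2 : (-b) + b = 0 := by ring
  have h3 : (-c-2*a*b) + c - 2*a*(-b) = 0 := by ring
  rw [h1, h2, h3]
  group

lemma Hp.conjNF (α β q r ν : ℤ) :
    (Hp.U p ^ α * Hp.V p ^ β * Hp.W p ^ (0:ℤ)) * (Hp.U p ^ q * Hp.V p ^ r * Hp.W p ^ ν) *
      (Hp.U p ^ α * Hp.V p ^ β * Hp.W p ^ (0:ℤ))⁻¹
    = Hp.U p ^ q * Hp.V p ^ r * Hp.W p ^ (ν + 2*(α*r - β*q)) := by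
  rw [Hp.invNF, Hp.mulNF, Hp.mulNF]
  have h1 : α + q + -α = q := by ring
  have h2 : β + r + -β = r := by ring
  have h3 : 0 + ν - 2*q*β + (-0-2*α*β) - 2*(-α)*(β+r) = ν + 2*(α*r - β*q) := by ring
  rw [h1, h2, h3]

end NF

/-- In `H_p = ⟨U,V,W | [U,V]=W², W^{2p}=1, W central⟩`, two elements `U^q V^r W^ν`
and `U^q* V^r* W^ν*` are conjugate if and only if `q = q*`, `r = r*` and
`ν ≡ ν* (mod 2·gcd(p,q,r))`. -/
theorem Hp_conjugacy (p q r ν q' r' ν' : ℤ) :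
    IsConj (Hp.U p ^ q * Hp.V p ^ r * Hp.W p ^ ν)
        (Hp.U p ^ q' * Hp.V p ^ r' * Hp.W p ^ ν') ↔
      q = q' ∧ r = r' ∧ ν ≡ ν' [ZMOD (2 * (p.gcd (q.gcd r) : ℤ))] := by
  constructor
  · intro h
    have h2 := (phi p).map_isConj h
    rw [phi_image, phi_image] at h2
    obtain ⟨g, hg⟩ := isConj_iff.1 h2
    have ha := congrArg Model.a hg
    have hb := congrArg Model.b hg
    have hc := congrArg Model.c hg
    simp only [Model.mul_a, Model.mul_b, Model.mul_c, Model.inv_a, Model.inv_b,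
      Model.inv_c] at ha hb hc
    have haq : q = q' := by omega
    have hbr : r = r' := by omega
    refine ⟨haq, hbr, ?_⟩
    have hzm : ((ν + 2*(g.a*r - g.b*q) : ℤ) : ZMod (2*p).natAbs)
        = ((ν' : ℤ) : ZMod (2*p).natAbs) := by
      push_cast
      push_cast at hc
      linear_combination hc
    have hmodp := (ZMod.intCast_eq_intCast_iff _ _ _).1 hzm
    have hdvd : ((2*p).natAbs : ℤ) ∣ ν' - (ν + 2*(g.a*r - g.b*q)) := Int.ModEq.dvd hmodp
    rw [Int.natAbs_dvd] at hdvd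
    obtain ⟨t, ht⟩ := hdvd
    set d : ℤ := (p.gcd (q.gcd r) : ℤ) with hdDef
    have hdqr : d ∣ (q.gcd r : ℤ) := Int.gcd_dvd_right _ _
    obtain ⟨P, hP⟩ : d ∣ p := Int.gcd_dvd_left _ _
    obtain ⟨Q, hQ⟩ : d ∣ q := hdqr.trans (Int.gcd_dvd_left _ _)
    obtain ⟨R, hR⟩ : d ∣ r := hdqr.trans (Int.gcd_dvd_right _ _)
    rw [Int.modEq_iff_dvd]
    refine ⟨g.a*R - g.b*Q + P*t, ?_⟩
    have hnu : ν' - ν = 2*(g.a*r - g.b*q) + 2*p*t := by linarith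
    rw [hnu]
    linear_combination 2*g.a*hR - 2*g.b*hQ + 2*t*hP
  · rintro ⟨rfl, rfl, hmod⟩
    set d : ℤ := (p.gcd (q.gcd r) : ℤ) with hdDef
    obtain ⟨k, hk⟩ : 2*d ∣ ν' - ν := Int.ModEq.dvd hmod
    have hb1 := Int.gcd_eq_gcd_ab p ((q.gcd r : ℤ))
    have hb2 := Int.gcd_eq_gcd_ab q r
    set A := Int.gcdA p ((q.gcd r : ℤ)) with hA
    set B := Int.gcdB p ((q.gcd r : ℤ)) with hB
    set C := Int.gcdA q r with hC
    set D := Int.gcdB q r with hD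
    have hd' : d = p*A + (q*C + r*D)*B := by rw [hdDef, hb1, hb2]
    set α : ℤ := D*B*k with hα
    set β : ℤ := -(C*B*k) with hβ
    set t : ℤ := A*k with ht
    have harith : ν' = (ν + 2*(α*r - β*q)) + 2*p*t := by
      rw [hd'] at hk
      linear_combination hk
    have hW : Hp.W p ^ (ν + 2*(α*r - β*q)) = Hp.W p ^ ν' := by
      conv_rhs => rw [harith, zpow_add, zpow_mul, Hp.rel_W2p, one_zpow, mul_one]
    exact isConj_iff.2 ⟨Hp.U p ^ α * Hp.V p ^ β * Hp.W p ^ (0:ℤ),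
      by rw [Hp.conjNF, hW]⟩
end

section
/- Define F : S³ × S³ × S³ → ℝ³ by F(x,y,z) = (x·iy + y·iz + z·ix, x·jy + y·jz + z·jx, x·ky + y·kz + z·kx), where S³ is the unit sphere in the quaternions ℍ, i, j, k act by left multiplication, and · is the Euclidean dot product on ℝ⁴ ≅ ℍ. Then F(x,y,z) = 0 if and only if x, y, z are collinear in ℝ⁴ (in particular, F is nonzero whenever x, y, z are distinct points of S³ not all on a common line — equivalently, whenever x, y, z are pairwise distinct). -/
open scoped Quaternion
noncomputable section

/-- The Euclidean dot product on `ℝ⁴ ≅ ℍ`. -/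
def qdot (a b : ℍ[ℝ]) : ℝ := (a * star b).re

/-- The imaginary unit quaternions. -/
def qi : ℍ[ℝ] := ⟨0, 1, 0, 0⟩
def qj : ℍ[ℝ] := ⟨0, 0, 1, 0⟩
def qk : ℍ[ℝ] := ⟨0, 0, 0, 1⟩

/-- The map `F(x,y,z) = (x·iy + y·iz + z·ix, x·jy + y·jz + z·jx, x·ky + y·kz + z·kx)`. -/
def Fmap (x y z : ℍ[ℝ]) : ℝ × ℝ × ℝ :=
  (qdot x (qi * y) + qdot y (qi * z) + qdot z (qi * x),
   qdot x (qj * y) + qdot y (qj * z) + qdot z (qj * x),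
   qdot x (qk * y) + qdot y (qk * z) + qdot z (qk * x))

lemma Fmap_key (x y z : ℍ[ℝ]) :
    Fmap x y z = (((x - y) * star (x - z)).imI, ((x - y) * star (x - z)).imJ,
      ((x - y) * star (x - z)).imK) := by
  simp only [Fmap, qdot, Prod.mk.injEq, Quaternion.re_mul, Quaternion.imI_mul,
    Quaternion.imJ_mul, Quaternion.imK_mul, Quaternion.re_star, Quaternion.imI_star,
    Quaternion.imJ_star, Quaternion.imK_star, Quaternion.re_sub, Quaternion.imI_sub,
    Quaternion.imJ_sub, Quaternion.imK_sub]
  simp only [qi, qj, qk]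
  refine ⟨by ring, by ring, by ring⟩

/-- For `x`, `y`, `z` on the unit sphere `S³ ⊂ ℍ`, the vector `F(x,y,z)` vanishes if
and only if `x`, `y`, `z` are collinear in `ℝ⁴`; in particular `F(x,y,z) ≠ 0` whenever
`x`, `y`, `z` are pairwise distinct points of `S³`. -/
theorem Fmap_eq_zero_iff_collinear (x y z : ℍ[ℝ])
    (hx : ‖x‖ = 1) (hy : ‖y‖ = 1) (hz : ‖z‖ = 1) :
    (Fmap x y z = 0 ↔ Collinear ℝ ({x, y, z} : Set ℍ[ℝ])) ∧
      (x ≠ y → y ≠ z → x ≠ z → Fmap x y z ≠ 0) := by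
  have hxm : x ∈ ({x, y, z} : Set ℍ[ℝ]) := by simp
  -- Step 1: Fmap = 0 iff (x-y)(star (x-z)) is real
  have h1 : Fmap x y z = 0 ↔ ∃ r : ℝ, (x - y) * star (x - z) = (r : ℍ[ℝ]) := by
    rw [Fmap_key]
    constructor
    · intro h
      have hI : ((x - y) * star (x - z)).imI = 0 := congrArg Prod.fst h
      have hJ : ((x - y) * star (x - z)).imJ = 0 := congrArg (fun p => p.2.1) h
      have hK : ((x - y) * star (x - z)).imK = 0 := congrArg (fun p => p.2.2) h
      refine ⟨((x - y) * star (x - z)).re, ?_⟩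
      refine QuaternionAlgebra.ext ?_ ?_ ?_ ?_ <;>
        simp only [hI, hJ, hK, Quaternion.re_coe, Quaternion.imI_coe, Quaternion.imJ_coe,
          Quaternion.imK_coe]
    · rintro ⟨r, hr⟩
      rw [hr]
      simp [Prod.ext_iff, Quaternion.imI_coe, Quaternion.imJ_coe, Quaternion.imK_coe]
  -- Step 2: real product iff linear dependence
  have h2 : (∃ r : ℝ, (x - y) * star (x - z) = (r : ℍ[ℝ])) ↔
      (x = z ∨ ∃ t : ℝ, x - y = t • (x - z)) := by
    constructor
    · rintro ⟨r, hr⟩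
      by_cases hxz : x = z
      · exact Or.inl hxz
      · refine Or.inr ⟨r / Quaternion.normSq (x - z), ?_⟩
        have hu : x - z ≠ 0 := sub_ne_zero.mpr hxz
        have hsu : star (x - z) ≠ 0 := star_ne_zero.mpr hu
        have hns : Quaternion.normSq (x - z) ≠ 0 := by
          simpa using hu
        apply mul_right_cancel₀ hsu
        rw [hr, smul_mul_assoc, Quaternion.self_mul_star]
        rw [Quaternion.smul_coe]
        rw [div_mul_cancel₀ _ hns]
    · rintro (hxz | ⟨t, ht⟩)
      · exact ⟨0, by simp [hxz]⟩
      · refine ⟨t * Quaternion.normSq (x - z), ?_⟩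
        rw [ht, smul_mul_assoc, Quaternion.self_mul_star, Quaternion.smul_coe]
  -- Step 3: dependence iff collinear
  have h3 : (x = z ∨ ∃ t : ℝ, x - y = t • (x - z)) ↔ Collinear ℝ ({x, y, z} : Set ℍ[ℝ]) := by
    constructor
    · rintro (hxz | ⟨t, ht⟩)
      · subst hxz
        have : ({x, y, x} : Set ℍ[ℝ]) = {x, y} := by
          ext w; simp; tauto
        rw [this]
        exact collinear_pair ℝ x y
      · rw [collinear_iff_of_mem hxm]
        refine ⟨x - z, ?_⟩
        rintro p (rfl | rfl | rfl)
        · exact ⟨0, by simp⟩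
        · refine ⟨-t, ?_⟩
          have hy' : p = x - t • (x - z) := by rw [← ht]; abel
          rw [vadd_eq_add, hy']; module
        · exact ⟨-1, by rw [vadd_eq_add]; module⟩
    · intro hc
      rw [collinear_iff_of_mem hxm] at hc
      obtain ⟨v, hv⟩ := hc
      by_cases hxz : x = z
      · exact Or.inl hxz
      obtain ⟨ry, hry⟩ := hv y (by simp)
      obtain ⟨rz, hrz⟩ := hv z (by simp)
      rw [vadd_eq_add] at hry hrz
      have hrz0 : rz ≠ 0 := by
        rintro rfl
        simp at hrz
        exact hxz hrz.symm
      refine Or.inr ⟨ry / rz, ?_⟩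
      have h1 : x - y = (-ry) • v := by rw [hry]; module
      have h2 : x - z = (-rz) • v := by rw [hrz]; module
      rw [h1, h2, smul_smul]
      congr 1
      field_simp
  refine ⟨h1.trans (h2.trans h3), ?_⟩
  -- Second part: distinct points on the sphere are not collinear
  intro hxy hyz hxz hF
  have hc := (h1.trans (h2.trans h3)).mp hF
  rw [collinear_iff_of_mem hxm] at hc
  obtain ⟨v, hv⟩ := hc
  obtain ⟨ry, hry⟩ := hv y (by simp)
  obtain ⟨rz, hrz⟩ := hv z (by simp)
  rw [vadd_eq_add] at hry hrz
  have hv0 : v ≠ 0 := by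
    rintro rfl
    simp at hrz
    exact hxz hrz.symm
  have hrz0 : rz ≠ 0 := by
    rintro rfl
    simp at hrz
    exact hxz hrz.symm
  set t : ℝ := ry / rz with htdef
  have hyt : y = (1 - t) • x + t • z := by
    have hzv : rz • v = z - x := by rw [hrz]; module
    have : ry • v = t • (z - x) := by
      rw [← hzv, smul_smul, htdef, div_mul_cancel₀ _ hrz0]
    rw [hry, this]
    module
  have ht0 : t ≠ 0 := by
    rintro h
    rw [h] at hyt
    simp at hyt
    exact hxy hyt.symm
  have ht1 : t ≠ 1 := by
    rintro h
    rw [h] at hyt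
    simp at hyt
    exact hyz hyt
  -- norm computation
  have hnorm : ‖y‖ ^ 2 = ‖(1 - t) • x‖ ^ 2 + 2 * inner ℝ ((1 - t) • x) (t • z) + ‖t • z‖ ^ 2 := by
    rw [hyt]; exact norm_add_sq_real _ _
  have hinner : (inner ℝ ((1 - t) • x) (t • z) : ℝ) = (1 - t) * t * inner ℝ x z := by
    rw [real_inner_smul_left, real_inner_smul_right]; ring
  have hns : ‖(1 - t) • x‖ ^ 2 = (1 - t) ^ 2 ∧ ‖t • z‖ ^ 2 = t ^ 2 := by
    constructor <;> rw [norm_smul] <;> simp [hx, hz, sq_abs]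
  have hc1 : (inner ℝ x z : ℝ) = 1 := by
    have hy2 : ‖y‖ ^ 2 = 1 := by rw [hy]; norm_num
    rw [hy2, hinner, hns.1, hns.2] at hnorm
    have htt : t * (1 - t) ≠ 0 := mul_ne_zero ht0 (sub_ne_zero.mpr (Ne.symm ht1))
    have key : 2 * (t * (1 - t)) * ((inner ℝ x z : ℝ) - 1) = 0 := by nlinarith [hnorm]
    have h2' : (2 : ℝ) * (t * (1 - t)) ≠ 0 := mul_ne_zero two_ne_zero htt
    have := (mul_eq_zero.mp key).resolve_left h2'
    linarith
  exact hxz ((inner_eq_one_iff_of_norm_eq_one hx hz).mp hc1)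
end
end

section
/- With F : ℍ × ℍ × ℍ → ℝ³ defined by F(x,y,z) = (x·iy + y·iz + z·ix, x·jy + y·jz + z·jx, x·ky + y·kz + z·kx), the Euclidean norm ‖F(x,y,z)‖ equals twice the area of the triangle in ℝ⁴ with vertices x, y, z, i.e. ‖F(x,y,z)‖ = ‖(y−x) ∧ (z−x)‖ where ∧ denotes the exterior product norm: ‖u ∧ v‖² = ‖u‖²‖v‖² − (u·v)². -/
open scoped Quaternion
noncomputable section

/-- For `x`, `y`, `z` on the unit sphere `S³ ⊂ ℍ`, the Euclidean norm of `F(x,y,z)`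
equals twice the area of the triangle in `ℝ⁴` with vertices `x`, `y`, `z`, namely
`‖(y−x) ∧ (z−x)‖ = √(‖y−x‖²‖z−x‖² − ((y−x)·(z−x))²)`. -/
theorem norm_Fmap_eq_twice_triangle_area (x y z : ℍ[ℝ])
    (hx : ‖x‖ = 1) (hy : ‖y‖ = 1) (hz : ‖z‖ = 1) :
    Real.sqrt ((Fmap x y z).1 ^ 2 + (Fmap x y z).2.1 ^ 2 + (Fmap x y z).2.2 ^ 2) =
      Real.sqrt (‖y - x‖ ^ 2 * ‖z - x‖ ^ 2 - qdot (y - x) (z - x) ^ 2) := by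
  congr 1
  have h : ∀ a : ℍ[ℝ], ‖a‖ ^ 2 = a.re ^ 2 + a.imI ^ 2 + a.imJ ^ 2 + a.imK ^ 2 := by
    intro a
    rw [sq, ← Quaternion.normSq_eq_norm_mul_self, Quaternion.normSq_def']
  rw [h, h]
  simp only [Fmap, qdot, Quaternion.re_mul, Quaternion.re_star,
    Quaternion.imI_star, Quaternion.imJ_star, Quaternion.imK_star,
    Quaternion.imI_mul, Quaternion.imJ_mul, Quaternion.imK_mul,
    Quaternion.re_sub, Quaternion.imI_sub, Quaternion.imJ_sub, Quaternion.imK_sub]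
  simp only [qi, qj, qk]
  ring
end
end
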